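/- Let m be an odd positive integer and ℓ ≥ 2. The number of orbits of arbitrary ℓ-tuples of elements of the dihedral group D_{2m} under simultaneous conjugation equals (2^ℓ + m^{ℓ−1}(2^ℓ − 1) + m^ℓ)/2. -/

import Mathlib

/-- Simultaneous conjugation on arbitrary `ℓ`-tuples in a group `G`;
`G^ℓ` is identified with `Hom(F_ℓ, G)`. -/
def conjRel (G : Type*) [Group G] (ℓ : ℕ) (s t : Fin ℓ → G) : Prop :=
  ∃ g : G, ∀ i, t i = g * s i * g⁻¹

open MulAction DihedralGroup

section dihedral

variable {m : ℕ}

lemma two_ne_zero_zmod (hodd : Odd m) (i : ZMod m) (h : i + i = 0) : i = 0 := by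
  have hu : IsUnit (2 : ZMod m) := by
    have := (ZMod.isUnit_iff_coprime 2 m).2 (Nat.coprime_two_left.2 hodd)
    simpa using this
  have h2 : (2 : ZMod m) * i = 0 := by rw [two_mul]; exact h
  exact (hu.mul_right_eq_zero).1 h2

lemma fixedBy_conj_eq (G : Type*) [Group G] (x : G) :
    fixedBy G (ConjAct.toConjAct x) = {y | Commute x y} := by
  ext y
  simp [MulAction.mem_fixedBy, ConjAct.smul_def, Commute, SemiconjBy,
    mul_inv_eq_iff_eq_mul]

lemma fixedBy_r_zero :
    fixedBy (DihedralGroup m) (ConjAct.toConjAct (r 0 : DihedralGroup m)) = Set.univ := by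
  rw [fixedBy_conj_eq]
  ext y
  simp [← one_def, Commute.one_left]

lemma fixedBy_r (hodd : Odd m) (i : ZMod m) (hi : i ≠ 0) :
    fixedBy (DihedralGroup m) (ConjAct.toConjAct (r i : DihedralGroup m)) = Set.range r := by
  rw [fixedBy_conj_eq]
  ext y
  cases y with
  | r j =>
      simp only [Set.mem_setOf_eq, Set.mem_range, r.injEq, exists_eq, iff_true]
      simp [Commute, SemiconjBy, r_mul_r, add_comm]
  | sr j =>
      simp only [Set.mem_setOf_eq, Commute, SemiconjBy, r_mul_sr, sr_mul_r, sr.injEq,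
        Set.mem_range, reduceCtorEq, exists_false, iff_false]
      intro h
      apply hi
      apply two_ne_zero_zmod hodd
      linear_combination -h

lemma fixedBy_sr (hodd : Odd m) (i : ZMod m) :
    fixedBy (DihedralGroup m) (ConjAct.toConjAct (sr i : DihedralGroup m))
      = {(1 : DihedralGroup m), sr i} := by
  rw [fixedBy_conj_eq]
  ext y
  cases y with
  | r j =>
      simp only [Set.mem_setOf_eq, Commute, SemiconjBy, sr_mul_r, r_mul_sr, sr.injEq,
        Set.mem_insert_iff, Set.mem_singleton_iff, one_def, r.injEq, reduceCtorEq, or_false]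
      constructor
      · intro h; apply two_ne_zero_zmod hodd; linear_combination h
      · intro h; rw [h]; ring
  | sr j =>
      simp only [Set.mem_setOf_eq, Commute, SemiconjBy, sr_mul_sr, r.injEq,
        Set.mem_insert_iff, Set.mem_singleton_iff, one_def, sr.injEq, reduceCtorEq, false_or]
      constructor
      · intro h
        have h0 : j - i = 0 := by
          apply two_ne_zero_zmod hodd; linear_combination h
        linear_combination h0
      · intro h; rw [h]

end dihedral


section main

open ConjAct

def fixedByPiEquiv (G : Type*) [Group G] (ℓ : ℕ) (g : ConjAct G) :
    fixedBy (Fin ℓ → G) g ≃ (Fin ℓ → fixedBy G g) where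
  toFun f i := ⟨f.1 i, congrFun f.2 i⟩
  invFun f := ⟨fun i => (f i).1, funext fun i => (f i).2⟩
  left_inv f := Subtype.ext rfl
  right_inv f := rfl

lemma card_fixedBy_tuples {G : Type*} [Group G] [Finite G] (ℓ : ℕ) (g : ConjAct G)
    [Fintype (fixedBy (Fin ℓ → G) g)] :
    Fintype.card (fixedBy (Fin ℓ → G) g) = Nat.card (fixedBy G g) ^ ℓ := by
  rw [← Nat.card_eq_fintype_card, Nat.card_congr (fixedByPiEquiv G ℓ g), Nat.card_fun]
  simp

lemma quot_conjRel_card (G : Type*) [Group G] (ℓ : ℕ) :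
    Nat.card (Quot (conjRel G ℓ)) =
      Nat.card (orbitRel.Quotient (ConjAct G) (Fin ℓ → G)) := by
  apply Nat.card_congr
  have key : ∀ u v : Fin ℓ → G, conjRel G ℓ u v ↔ v ∈ orbit (ConjAct G) u := by
    intro u v
    constructor
    · rintro ⟨g, hg⟩
      exact ⟨toConjAct g, funext fun i => by simp [ConjAct.smul_def, (hg i).symm]⟩
    · rintro ⟨g, rfl⟩
      exact ⟨ofConjAct g, fun i => by simp [ConjAct.smul_def]⟩
  have key2 : ∀ u v : Fin ℓ → G, conjRel G ℓ u v ↔ (orbitRel (ConjAct G) (Fin ℓ → G)) u v := by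
    intro u v
    rw [key]
    exact ⟨fun h => (orbitRel (ConjAct G) (Fin ℓ → G)).iseqv.symm h,
      fun h => (orbitRel (ConjAct G) (Fin ℓ → G)).iseqv.symm h⟩
  exact Quot.congr (Equiv.refl _) key2

lemma sum_elim_bij (m : ℕ) : Function.Bijective (Sum.elim DihedralGroup.r DihedralGroup.sr :
    ZMod m ⊕ ZMod m → DihedralGroup m) := by
  constructor
  · rintro (a | a) (b | b) h <;> simp only [Sum.elim_inl, Sum.elim_inr] at h <;>
      first
      | (injection h with h; rw [h])
      | (exfalso; cases h)
  · intro y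
    cases y with
    | r j => exact ⟨Sum.inl j, rfl⟩
    | sr j => exact ⟨Sum.inr j, rfl⟩

/-- For `m` odd and `ℓ ≥ 2`, the number of orbits of arbitrary `ℓ`-tuples of elements of the
dihedral group `D_{2m}` under simultaneous conjugation equals
`(2^ℓ + m^(ℓ-1)(2^ℓ - 1) + m^ℓ)/2`. -/
theorem card_tuples_orbits_dihedral_odd (m : ℕ) (hm : 0 < m) (hodd : Odd m)
    (ℓ : ℕ) (hℓ : 2 ≤ ℓ) :
    2 * Nat.card (Quot (conjRel (DihedralGroup m) ℓ)) =
      2 ^ ℓ + m ^ (ℓ - 1) * (2 ^ ℓ - 1) + m ^ ℓ := by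
  classical
  haveI : NeZero m := ⟨hm.ne'⟩
  rw [quot_conjRel_card]
  haveI : ∀ a : ConjAct (DihedralGroup m), Fintype (fixedBy (Fin ℓ → DihedralGroup m) a) :=
    fun a => Fintype.ofFinite _
  haveI : Fintype (orbitRel.Quotient (ConjAct (DihedralGroup m)) (Fin ℓ → DihedralGroup m)) :=
    Fintype.ofFinite _
  have burnside := MulAction.sum_card_fixedBy_eq_card_orbits_mul_card_group
    (ConjAct (DihedralGroup m)) (Fin ℓ → DihedralGroup m)
  have hsum1 : ∑ a : ConjAct (DihedralGroup m), Fintype.card (fixedBy (Fin ℓ → DihedralGroup m) a)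
      = ∑ x : DihedralGroup m, Nat.card (fixedBy (DihedralGroup m) (toConjAct x)) ^ ℓ := by
    refine (Fintype.sum_equiv (toConjAct (G := DihedralGroup m)).toEquiv _ _ fun x => ?_).symm
    exact (card_fixedBy_tuples ℓ (toConjAct x)).symm
  have hsum2 : ∑ x : DihedralGroup m, Nat.card (fixedBy (DihedralGroup m) (toConjAct x)) ^ ℓ
      = ∑ x : ZMod m ⊕ ZMod m,
          Nat.card (fixedBy (DihedralGroup m)
            (toConjAct (Sum.elim DihedralGroup.r DihedralGroup.sr x))) ^ ℓ :=
    (Fintype.sum_bijective _ (sum_elim_bij m) _ _ fun x => rfl).symm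
  rw [hsum1, hsum2, Fintype.sum_sum_type] at burnside
  have rinj : Function.Injective (DihedralGroup.r : ZMod m → DihedralGroup m) := by
    intro a b h; injection h
  have hr0 : Nat.card (fixedBy (DihedralGroup m) (toConjAct (r 0 : DihedralGroup m))) = 2 * m := by
    rw [fixedBy_r_zero, Nat.card_coe_set_eq, Set.ncard_univ, Nat.card_eq_fintype_card,
      DihedralGroup.card]
  have hr : ∀ i : ZMod m, i ≠ 0 →
      Nat.card (fixedBy (DihedralGroup m) (toConjAct (r i : DihedralGroup m))) = m := by
    intro i hi
    rw [fixedBy_r hodd i hi, Nat.card_range_of_injective rinj, Nat.card_zmod]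
  have hsr : ∀ i : ZMod m,
      Nat.card (fixedBy (DihedralGroup m) (toConjAct (sr i : DihedralGroup m))) = 2 := by
    intro i
    rw [fixedBy_sr hodd i, Nat.card_coe_set_eq, Set.ncard_pair]
    simp [DihedralGroup.one_def, -DihedralGroup.r_zero]
  have h1 : ∑ a : ZMod m,
      Nat.card (fixedBy (DihedralGroup m) (toConjAct (r a : DihedralGroup m))) ^ ℓ
      = (2 * m) ^ ℓ + (m - 1) * m ^ ℓ := by
    rw [← Finset.add_sum_erase _ _ (Finset.mem_univ (0 : ZMod m)), hr0]
    congr 1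
    rw [Finset.sum_congr rfl (fun a ha => by
      rw [hr a (Finset.mem_erase.1 ha).1]), Finset.sum_const, smul_eq_mul,
      Finset.card_erase_of_mem (Finset.mem_univ _), Finset.card_univ, ZMod.card]
  have h2 : ∑ a : ZMod m,
      Nat.card (fixedBy (DihedralGroup m) (toConjAct (sr a : DihedralGroup m))) ^ ℓ
      = m * 2 ^ ℓ := by
    rw [Finset.sum_congr rfl (fun a _ => by rw [hsr a]), Finset.sum_const, smul_eq_mul,
      Finset.card_univ, ZMod.card]
  simp only [Sum.elim_inl, Sum.elim_inr] at burnside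
  rw [h1, h2, ConjAct.card, DihedralGroup.card, ← Nat.card_eq_fintype_card] at burnside
  set N := Nat.card (orbitRel.Quotient (ConjAct (DihedralGroup m)) (Fin ℓ → DihedralGroup m))
    with hN
  have hml : m ^ (ℓ - 1) * m = m ^ ℓ := by
    rw [← pow_succ]; congr 1; omega
  have h2p : 1 ≤ 2 ^ ℓ := Nat.one_le_two_pow
  have hm1 : 1 ≤ m := hm
  apply Nat.eq_of_mul_eq_mul_right hm
  have hmlz : (m : ℤ) ^ (ℓ - 1) * m = (m : ℤ) ^ ℓ := by exact_mod_cast hml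
  zify [h2p, hm1] at burnside ⊢
  linear_combination -burnside - ((2 : ℤ) ^ ℓ - 1) * hmlz
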